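/- Let α, β be real numbers with α > 1 and β > 3, and set p₋ = (β+1−√((β+1)(β−3)))/(2β) and p₊ = (β+1+√((β+1)(β−3)))/(2β). Assume the conditions (C3a) p₋ = (α−1)/α, (C3b) f_β(1/α) = p₊, and (C3c) f_α(p₊) = 1/α. Then the three-point set Λ = {(α−1)/α, 1/α, p₊} is an invariant set of the IFS {f_α, f_β}: f_α(Λ) ∪ f_β(Λ) = Λ. Specifically, f_α fixes (α−1)/α, f_α(1/α) = (α−1)/α, f_α(p₊) = 1/α, f_β((α−1)/α) = p₊, f_β(1/α) = p₊, and f_β(p₊) = (α−1)/α. -/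

import Mathlib

/-- The logistic map `f_γ(x) = γ·x·(1−x)`. -/
def logistic (γ x : ℝ) : ℝ := γ * x * (1 - x)

/-- Under conditions (C3a)–(C3c), the three-point set `Λ = {(α−1)/α, 1/α, p₊}` is an
invariant set of the logistic IFS `{f_α, f_β}`, with the indicated transitions. -/
theorem logistic_IFS_three_point_invariant_set (α β : ℝ)
    (hα : α > 1) (hβ : β > 3)
    (pm pp : ℝ)
    (hpm : pm = (β + 1 - Real.sqrt ((β + 1) * (β - 3))) / (2 * β))
    (hpp : pp = (β + 1 + Real.sqrt ((β + 1) * (β - 3))) / (2 * β))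
    (hC3a : pm = (α - 1) / α)
    (hC3b : logistic β (1 / α) = pp)
    (hC3c : logistic α pp = 1 / α) :
    (logistic α '' ({(α - 1) / α, 1 / α, pp} : Set ℝ) ∪
      logistic β '' ({(α - 1) / α, 1 / α, pp} : Set ℝ)
        = ({(α - 1) / α, 1 / α, pp} : Set ℝ)) ∧
    logistic α ((α - 1) / α) = (α - 1) / α ∧
    logistic α (1 / α) = (α - 1) / α ∧
    logistic α pp = 1 / α ∧
    logistic β ((α - 1) / α) = pp ∧
    logistic β (1 / α) = pp ∧
    logistic β pp = (α - 1) / α := by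
  have hα0 : α ≠ 0 := by positivity
  have hβ0 : β ≠ 0 := by positivity
  set s := Real.sqrt ((β + 1) * (β - 3)) with hs
  have hs2 : s ^ 2 = (β + 1) * (β - 3) := by
    exact Real.sq_sqrt (by nlinarith)
  have h1 : logistic α ((α - 1) / α) = (α - 1) / α := by
    unfold logistic; field_simp; ring
  have h2 : logistic α (1 / α) = (α - 1) / α := by
    unfold logistic; field_simp
  have h4 : logistic β pm = pp := by
    unfold logistic; rw [hpm, hpp]; field_simp; nlinarith [hs2]
  have h6 : logistic β pp = pm := by
    unfold logistic; rw [hpm, hpp]; field_simp; nlinarith [hs2]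
  rw [hC3a] at h4 h6
  refine ⟨?_, h1, h2, hC3c, h4, hC3b, h6⟩
  ext x
  simp only [Set.mem_union, Set.mem_image, Set.mem_insert_iff, Set.mem_singleton_iff]
  constructor
  · rintro (⟨y, (rfl | rfl | rfl), rfl⟩ | ⟨y, (rfl | rfl | rfl), rfl⟩) <;>
      simp [h1, h2, hC3c, h4, hC3b, h6, ← one_div]
  · rintro (rfl | rfl | rfl)
    · exact Or.inl ⟨(α - 1) / α, Or.inl rfl, h1⟩
    · exact Or.inl ⟨pp, Or.inr (Or.inr rfl), hC3c⟩
    · exact Or.inr ⟨(α - 1) / α, Or.inl rfl, h4⟩
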